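/- arXiv:0807.4252 — 5 statements merged into one kernel-verified Lean document; each statement's English description precedes it below -/
import Mathlib

section
/- Matrix mutation preserves skew-symmetrizability: if the principal n×n part B of an m×n integer matrix B̃ satisfies DB skew-symmetric for some diagonal matrix D with positive diagonal entries, then the principal part of μ_k(B̃) satisfies D·μ_k(B) skew-symmetric for the same D. -/
/-- Mutation of an `m × n` exchange matrix in direction `k`. -/
def matMut {m n : ℕ} (h : n ≤ m) (B : Matrix (Fin m) (Fin n) ℤ) (k : Fin n) :
    Matrix (Fin m) (Fin n) ℤ :=
  fun i j =>
    if i = Fin.castLE h k ∨ j = k then -B i j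
    else B i j + Int.sign (B i k) * max (B i k * B (Fin.castLE h k) j) 0

private lemma key (dk di dj a b a' b' p q : ℤ) (hdk : 0 < dk) (hdi : 0 < di)
    (hdj : 0 < dj) (h0 : di * p = -(dj * q))
    (h1 : di * a = -(dk * b')) (h2 : dk * b = -(dj * a')) :
    di * (p + a.sign * max (a * b) 0) = -(dj * (q + a'.sign * max (a' * b') 0)) := by
  have hE : dk * (dj * (a' * b')) = dk * (di * (a * b)) := by
    linear_combination (dk * b') * h2 - (dk * b) * h1
  have hE2 : dj * (a' * b') = di * (a * b) := mul_left_cancel₀ hdk.ne' hE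
  rcases le_or_gt (a * b) 0 with hab | hab
  · have hab' : a' * b' ≤ 0 := by nlinarith
    rw [max_eq_right hab, max_eq_right hab']
    linarith
  · have hab' : 0 < a' * b' := by nlinarith
    rw [max_eq_left hab.le, max_eq_left hab'.le]
    have hs : a'.sign = -a.sign := by
      rcases lt_trichotomy a 0 with ha | ha | ha
      · have hb : b < 0 := by nlinarith
        have ha' : 0 < a' := by nlinarith
        rw [Int.sign_eq_one_of_pos ha', Int.sign_eq_neg_one_of_neg ha]; ring
      · simp [ha] at hab
      · have hb : 0 < b := by nlinarith
        have ha' : a' < 0 := by nlinarith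
        rw [Int.sign_eq_neg_one_of_neg ha', Int.sign_eq_one_of_pos ha]
    rw [hs]
    linear_combination h0 - a.sign * hE2

/-- Matrix mutation preserves skew-symmetrizability, with the same
skew-symmetrizing diagonal matrix `D = diag(d)`. -/
theorem matrix_mutation_preserves_skew_symmetrizable {m n : ℕ} (h : n ≤ m)
    (B : Matrix (Fin m) (Fin n) ℤ) (d : Fin n → ℤ) (hd : ∀ i, 0 < d i)
    (hskew : ∀ i j : Fin n,
      d i * B (Fin.castLE h i) j = -(d j * B (Fin.castLE h j) i))
    (k : Fin n) :
    ∀ i j : Fin n,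
      d i * (matMut h B k) (Fin.castLE h i) j
        = -(d j * (matMut h B k) (Fin.castLE h j) i) := by
  intro i j
  simp only [matMut, Fin.castLE_inj]
  by_cases hc : i = k ∨ j = k
  · rw [if_pos hc, if_pos hc.symm]
    have := hskew i j
    linarith
  · rw [if_neg hc, if_neg (fun hc' => hc hc'.symm)]
    exact key (d k) (d i) (d j) _ _ _ _ _ _ (hd k) (hd i) (hd j)
      (hskew i j) (hskew i k) (hskew k j)
end

section
/- Define a sequence of 3×3 integer matrices C^{(r)} (rows indexed by -1,-2,-3, columns by 1,2,3) by the recurrence: if r is even, C^{(r+1)}_{i,1} = -C^{(r)}_{i,1}, C^{(r+1)}_{i,2} = -C^{(r)}_{i,2}, C^{(r+1)}_{-1,3} = C^{(r)}_{-1,3} - [C^{(r)}_{-1,1}]_- - 3[C^{(r)}_{-1,2}]_-, C^{(r+1)}_{-2,3} = C^{(r)}_{-2,3} - [C^{(r)}_{-2,1}]_- - [C^{(r)}_{-2,2}]_-, C^{(r+1)}_{-3,3} = C^{(r)}_{-3,3} - [C^{(r)}_{-3,1}]_- - 3[C^{(r)}_{-3,2}]_-; and if r is odd, C^{(r+1)}_{i,3}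 = -C^{(r)}_{i,3}, C^{(r+1)}_{i,1} = C^{(r)}_{i,1} - [C^{(r)}_{i,3}]_- for all i, C^{(r+1)}_{-1,2} = C^{(r)}_{-1,2} - [C^{(r)}_{-1,3}]_-, C^{(r+1)}_{-2,2} = C^{(r)}_{-2,2} - 3[C^{(r)}_{-2,3}]_-, C^{(r+1)}_{-3,2} = C^{(r)}_{-3,2} - [C^{(r)}_{-3,3}]_-, with initial value C^{(0)} = [[1,0,0],[-1,-1,1],[0,-1,1]]. Then the row C^{(r)}_{-2} is periodic with period 4 in r ∈ Z: C^{(r)}_{-2} = (-1,-1,1) if r ≡ 0 mod 4, (1,1,-1) if r ≡ 1 mod 4, (0,-2,1) if r ≡ 2 mod 4, and (0,2,-1) if r ≡ 3 mod 4. -/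
/-- `[x]_- = max(0, -x)`. -/
def nPart (x : ℤ) : ℤ := max 0 (-x)

/-- The bipartite-belt step applied when `r` is even: columns `1` and `2`
change sign, and column `3` is updated. -/
def stepEven (C : Matrix (Fin 3) (Fin 3) ℤ) : Matrix (Fin 3) (Fin 3) ℤ :=
  Matrix.of fun i j =>
    if j = 2 then C i 2 - nPart (C i 0) - ![3, 1, 3] i * nPart (C i 1)
    else -C i j

/-- The bipartite-belt step applied when `r` is odd: column `3` changes sign,
and columns `1` and `2` are updated. -/
def stepOdd (C : Matrix (Fin 3) (Fin 3) ℤ) : Matrix (Fin 3) (Fin 3) ℤ :=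
  Matrix.of fun i j =>
    if j = 2 then -C i 2
    else if j = 0 then C i 0 - nPart (C i 2)
    else C i 1 - ![1, 3, 1] i * nPart (C i 2)

/-- The initial value `C⁽⁰⁾`; rows are indexed by `(-1,-2,-3)`, columns by `(1,2,3)`. -/
def C0 : Matrix (Fin 3) (Fin 3) ℤ := !![1, 0, 0; -1, -1, 1; 0, -1, 1]

def Tgt (r : ℤ) : Fin 3 → ℤ :=
  if r % 4 = 0 then ![-1, -1, 1]
  else if r % 4 = 1 then ![1, 1, -1]
  else if r % 4 = 2 then ![0, -2, 1]
  else ![0, 2, -1]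

lemma fwd (C : ℤ → Matrix (Fin 3) (Fin 3) ℤ)
    (hrec : ∀ r : ℤ, C (r + 1) = if Even r then stepEven (C r) else stepOdd (C r))
    (r : ℤ) (h : ∀ j, C r 1 j = Tgt r j) : ∀ j, C (r + 1) 1 j = Tgt (r + 1) j := by
  have h4 : r % 4 = 0 ∨ r % 4 = 1 ∨ r % 4 = 2 ∨ r % 4 = 3 := by omega
  have h0 := h 0; have h1 := h 1; have h2 := h 2
  rcases h4 with hc | hc | hc | hc
  · have hev : Even r := by rw [Int.even_iff]; omega
    have hr1 : (r + 1) % 4 = 1 := by omega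
    simp [Tgt, hc] at h0 h1 h2
    rw [hrec r, if_pos hev]
    intro j; fin_cases j <;>
      simp [stepEven, Tgt, hr1, h0, h1, h2, nPart]
  · have hev : ¬ Even r := by rw [Int.even_iff]; omega
    have hr1 : (r + 1) % 4 = 2 := by omega
    simp [Tgt, hc] at h0 h1 h2
    rw [hrec r, if_neg hev]
    intro j; fin_cases j <;>
      simp [stepOdd, Tgt, hr1, h0, h1, h2, nPart]
  · have hev : Even r := by rw [Int.even_iff]; omega
    have hr1 : (r + 1) % 4 = 3 := by omega
    simp [Tgt, hc] at h0 h1 h2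
    rw [hrec r, if_pos hev]
    intro j; fin_cases j <;>
      simp [stepEven, Tgt, hr1, h0, h1, h2, nPart]
  · have hev : ¬ Even r := by rw [Int.even_iff]; omega
    have hr1 : (r + 1) % 4 = 0 := by omega
    simp [Tgt, hc] at h0 h1 h2
    rw [hrec r, if_neg hev]
    intro j; fin_cases j <;>
      simp [stepOdd, Tgt, hr1, h0, h1, h2, nPart]

lemma bwd (C : ℤ → Matrix (Fin 3) (Fin 3) ℤ)
    (hrec : ∀ r : ℤ, C (r + 1) = if Even r then stepEven (C r) else stepOdd (C r))
    (r : ℤ) (h : ∀ j, C (r + 1) 1 j = Tgt (r + 1) j) : ∀ j, C r 1 j = Tgt r j := by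
  have h4 : r % 4 = 0 ∨ r % 4 = 1 ∨ r % 4 = 2 ∨ r % 4 = 3 := by omega
  have h0 := h 0; have h1 := h 1; have h2 := h 2
  rcases h4 with hc | hc | hc | hc
  · have hev : Even r := by rw [Int.even_iff]; omega
    have hr1 : (r + 1) % 4 = 1 := by omega
    rw [hrec r, if_pos hev] at h0 h1 h2
    simp [stepEven, Tgt, hr1] at h0 h1 h2
    have e0 : C r 1 0 = -1 := by linarith
    have e1 : C r 1 1 = -1 := by linarith
    rw [e0, e1] at h2
    have e2 : C r 1 2 = 1 := by simp [nPart] at h2; linarith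
    intro j; fin_cases j <;> simp [Tgt, hc, e0, e1, e2]
  · have hev : ¬ Even r := by rw [Int.even_iff]; omega
    have hr1 : (r + 1) % 4 = 2 := by omega
    rw [hrec r, if_neg hev] at h0 h1 h2
    simp [stepOdd, Tgt, hr1] at h0 h1 h2
    have e2 : C r 1 2 = -1 := by linarith
    rw [e2] at h0 h1
    have e0 : C r 1 0 = 1 := by simp [nPart] at h0; linarith
    have e1 : C r 1 1 = 1 := by simp [nPart] at h1; linarith
    intro j; fin_cases j <;> simp [Tgt, hc, e0, e1, e2]
  · have hev : Even r := by rw [Int.even_iff]; omega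
    have hr1 : (r + 1) % 4 = 3 := by omega
    rw [hrec r, if_pos hev] at h0 h1 h2
    simp [stepEven, Tgt, hr1] at h0 h1 h2
    have e0 : C r 1 0 = 0 := by linarith
    have e1 : C r 1 1 = -2 := by linarith
    rw [e0, e1] at h2
    have e2 : C r 1 2 = 1 := by simp [nPart] at h2; linarith
    intro j; fin_cases j <;> simp [Tgt, hc, e0, e1, e2]
  · have hev : ¬ Even r := by rw [Int.even_iff]; omega
    have hr1 : (r + 1) % 4 = 0 := by omega
    rw [hrec r, if_neg hev] at h0 h1 h2
    simp [stepOdd, Tgt, hr1] at h0 h1 h2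
    have e2 : C r 1 2 = -1 := by linarith
    rw [e2] at h0 h1
    have e0 : C r 1 0 = 0 := by simp [nPart] at h0; linarith
    have e1 : C r 1 1 = 2 := by simp [nPart] at h1; linarith
    intro j; fin_cases j <;> simp [Tgt, hc, e0, e1, e2]


/-- The row of `C⁽ʳ⁾` indexed by `-2` is `4`-periodic in `r ∈ ℤ`. -/
theorem C_row_neg2_periodic (C : ℤ → Matrix (Fin 3) (Fin 3) ℤ) (h0 : C 0 = C0)
    (hrec : ∀ r : ℤ, C (r + 1) = if Even r then stepEven (C r) else stepOdd (C r)) :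
    ∀ r : ℤ, ∀ j : Fin 3,
      C r 1 j =
        (if r % 4 = 0 then ![-1, -1, 1]
         else if r % 4 = 1 then ![1, 1, -1]
         else if r % 4 = 2 then ![0, -2, 1]
         else ![0, 2, -1]) j := by
  have key : ∀ r : ℤ, ∀ j, C r 1 j = Tgt r j := by
    intro r
    induction r using Int.induction_on with
    | zero => intro j; rw [h0]; fin_cases j <;> simp [C0, Tgt]
    | succ n ih => exact fwd C hrec n ih
    | pred n ih =>
        have := bwd C hrec (-(n:ℤ) - 1) (by simpa using ih)
        simpa using this
  intro r j
  exact key r j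
end

section
/- With C^{(r)} as defined by the bipartite-belt recurrence with initial value C^{(0)} = [[1,0,0],[-1,-1,1],[0,-1,1]], for all r ≥ 1 the row C^{(r)}_{-1} satisfies: C^{(r)}_{-1,2} = (-1)^{r+1}·⌊r/4⌋ and C^{(r)}_{-1,3} = (-1)^r·(⌈r/2⌉ - 1). -/
lemma nPart_of_nonpos {x : ℤ} (h : x ≤ 0) : nPart x = -x := by
  simp [nPart]; omega

lemma nPart_of_nonneg {x : ℤ} (h : 0 ≤ x) : nPart x = 0 := by
  simp [nPart]; omega

section
variable (C : ℤ → Matrix (Fin 3) (Fin 3) ℤ)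
variable (hrec : ∀ r : ℤ, C (r + 1) = if Even r then stepEven (C r) else stepOdd (C r))
include hrec

lemma fwd_s6 (k : ℤ) (hk : 0 ≤ k)
    (a0 : C (4*k+3) 0 0 = k+1) (a1 : C (4*k+3) 0 1 = k) (a2 : C (4*k+3) 0 2 = -(2*k+1)) :
    (C (4*k+4) 0 0 = -k ∧ C (4*k+4) 0 1 = -(k+1) ∧ C (4*k+4) 0 2 = 2*k+1) ∧
    (C (4*k+5) 0 0 = k ∧ C (4*k+5) 0 1 = k+1 ∧ C (4*k+5) 0 2 = -(2*k+2)) ∧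
    (C (4*k+6) 0 0 = -(k+2) ∧ C (4*k+6) 0 1 = -(k+1) ∧ C (4*k+6) 0 2 = 2*k+2) ∧
    (C (4*k+7) 0 0 = k+2 ∧ C (4*k+7) 0 1 = k+1 ∧ C (4*k+7) 0 2 = -(2*k+3)) := by
  have o1 : ¬ Even (4*k+3:ℤ) := (Int.not_even_iff_odd).mpr ⟨2*k+1, by ring⟩
  have e1 : Even (4*k+4:ℤ) := ⟨2*k+2, by ring⟩
  have o2 : ¬ Even (4*k+5:ℤ) := (Int.not_even_iff_odd).mpr ⟨2*k+2, by ring⟩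
  have e2 : Even (4*k+6:ℤ) := ⟨2*k+3, by ring⟩
  have n1 : nPart (-(2*k+1)) = 2*k+1 := by rw [nPart_of_nonpos (by linarith)]; ring
  have n2 : nPart (-k) = k := by rw [nPart_of_nonpos (by linarith)]; ring
  have n3 : nPart (-(k+1)) = k+1 := by rw [nPart_of_nonpos (by linarith)]; ring
  have n4 : nPart (-(2*k+2)) = 2*k+2 := by rw [nPart_of_nonpos (by linarith)]; ring
  have n5 : nPart (-(k+2)) = k+2 := by rw [nPart_of_nonpos (by linarith)]; ring
  have r1 : C (4*k+4) = stepOdd (C (4*k+3)) := by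
    rw [show (4*k+4:ℤ)=4*k+3+1 by ring, hrec, if_neg o1]
  have b0 : C (4*k+4) 0 0 = -k := by
    rw [r1]; show C (4*k+3) 0 0 - nPart (C (4*k+3) 0 2) = -k; rw [a0, a2, n1]; ring
  have b1 : C (4*k+4) 0 1 = -(k+1) := by
    rw [r1]; show C (4*k+3) 0 1 - ![1,3,1] 0 * nPart (C (4*k+3) 0 2) = -(k+1)
    rw [a1, a2, n1]; norm_num; ring
  have b2 : C (4*k+4) 0 2 = 2*k+1 := by
    rw [r1]; show -(C (4*k+3) 0 2) = 2*k+1; rw [a2]; ring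
  have r2 : C (4*k+5) = stepEven (C (4*k+4)) := by
    rw [show (4*k+5:ℤ)=4*k+4+1 by ring, hrec, if_pos e1]
  have c0 : C (4*k+5) 0 0 = k := by
    rw [r2]; show -(C (4*k+4) 0 0) = k; rw [b0]; ring
  have c1 : C (4*k+5) 0 1 = k+1 := by
    rw [r2]; show -(C (4*k+4) 0 1) = k+1; rw [b1]; ring
  have c2 : C (4*k+5) 0 2 = -(2*k+2) := by
    rw [r2]
    show C (4*k+4) 0 2 - nPart (C (4*k+4) 0 0) - ![3,1,3] 0 * nPart (C (4*k+4) 0 1) = -(2*k+2)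
    rw [b0, b1, b2, n2, n3]; norm_num; ring
  have r3 : C (4*k+6) = stepOdd (C (4*k+5)) := by
    rw [show (4*k+6:ℤ)=4*k+5+1 by ring, hrec, if_neg o2]
  have d0 : C (4*k+6) 0 0 = -(k+2) := by
    rw [r3]; show C (4*k+5) 0 0 - nPart (C (4*k+5) 0 2) = -(k+2); rw [c0, c2, n4]; ring
  have d1 : C (4*k+6) 0 1 = -(k+1) := by
    rw [r3]; show C (4*k+5) 0 1 - ![1,3,1] 0 * nPart (C (4*k+5) 0 2) = -(k+1)
    rw [c1, c2, n4]; norm_num; ring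
  have d2 : C (4*k+6) 0 2 = 2*k+2 := by
    rw [r3]; show -(C (4*k+5) 0 2) = 2*k+2; rw [c2]; ring
  have r4 : C (4*k+7) = stepEven (C (4*k+6)) := by
    rw [show (4*k+7:ℤ)=4*k+6+1 by ring, hrec, if_pos e2]
  have f0 : C (4*k+7) 0 0 = k+2 := by
    rw [r4]; show -(C (4*k+6) 0 0) = k+2; rw [d0]; ring
  have f1 : C (4*k+7) 0 1 = k+1 := by
    rw [r4]; show -(C (4*k+6) 0 1) = k+1; rw [d1]; ring
  have f2 : C (4*k+7) 0 2 = -(2*k+3) := by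
    rw [r4]
    show C (4*k+6) 0 2 - nPart (C (4*k+6) 0 0) - ![3,1,3] 0 * nPart (C (4*k+6) 0 1) = -(2*k+3)
    rw [d0, d1, d2, n5, n3]; norm_num; ring
  exact ⟨⟨b0, b1, b2⟩, ⟨c0, c1, c2⟩, ⟨d0, d1, d2⟩, ⟨f0, f1, f2⟩⟩

lemma base123 (h0 : C 0 = C0) :
    (C 1 0 1 = 0 ∧ C 1 0 2 = 0) ∧ (C 2 0 1 = 0 ∧ C 2 0 2 = 0) ∧
    (C 3 0 0 = 1 ∧ C 3 0 1 = 0 ∧ C 3 0 2 = -1) := by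
  have g00 : C 0 0 0 = 1 := by rw [h0]; rfl
  have g01 : C 0 0 1 = 0 := by rw [h0]; rfl
  have g02 : C 0 0 2 = 0 := by rw [h0]; rfl
  have o1 : ¬ Even (1:ℤ) := by decide
  have e2 : Even (2:ℤ) := ⟨1, by ring⟩
  have np0 : nPart 0 = 0 := by rw [nPart_of_nonneg le_rfl]
  have np1 : nPart 1 = 0 := by rw [nPart_of_nonneg one_pos.le]
  have npm1 : nPart (-1) = 1 := by rw [nPart_of_nonpos (by norm_num)]; ring
  have r1 : C 1 = stepEven (C 0) := by
    rw [show (1:ℤ)=0+1 by ring, hrec, if_pos Even.zero]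
  have a0 : C 1 0 0 = -1 := by rw [r1]; show -(C 0 0 0) = -1; rw [g00]
  have a1 : C 1 0 1 = 0 := by rw [r1]; show -(C 0 0 1) = 0; rw [g01]; ring
  have a2 : C 1 0 2 = 0 := by
    rw [r1]; show C 0 0 2 - nPart (C 0 0 0) - ![3,1,3] 0 * nPart (C 0 0 1) = 0
    rw [g00, g01, g02, np0, np1]; norm_num
  have r2 : C 2 = stepOdd (C 1) := by
    rw [show (2:ℤ)=1+1 by ring, hrec, if_neg o1]
  have b0 : C 2 0 0 = -1 := by
    rw [r2]; show C 1 0 0 - nPart (C 1 0 2) = -1; rw [a0, a2, np0]; ring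
  have b1 : C 2 0 1 = 0 := by
    rw [r2]; show C 1 0 1 - ![1,3,1] 0 * nPart (C 1 0 2) = 0; rw [a1, a2, np0]; norm_num
  have b2 : C 2 0 2 = 0 := by rw [r2]; show -(C 1 0 2) = 0; rw [a2]; ring
  have r3 : C 3 = stepEven (C 2) := by
    rw [show (3:ℤ)=2+1 by ring, hrec, if_pos e2]
  have c0 : C 3 0 0 = 1 := by rw [r3]; show -(C 2 0 0) = 1; rw [b0]; ring
  have c1 : C 3 0 1 = 0 := by rw [r3]; show -(C 2 0 1) = 0; rw [b1]; ring
  have c2 : C 3 0 2 = -1 := by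
    rw [r3]; show C 2 0 2 - nPart (C 2 0 0) - ![3,1,3] 0 * nPart (C 2 0 1) = -1
    rw [b0, b1, b2, npm1, np0]; norm_num
  exact ⟨⟨a1, a2⟩, ⟨b1, b2⟩, ⟨c0, c1, c2⟩⟩

lemma key_s6 (h0 : C 0 = C0) : ∀ k : ℕ,
    C (4*(k:ℤ)+3) 0 0 = (k:ℤ)+1 ∧ C (4*(k:ℤ)+3) 0 1 = (k:ℤ) ∧
    C (4*(k:ℤ)+3) 0 2 = -(2*(k:ℤ)+1) := by
  intro k
  induction k with
  | zero =>
    have h := (base123 C hrec h0).2.2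
    refine ⟨?_, ?_, ?_⟩ <;>
      · rw [show (4*((0:ℕ):ℤ)+3) = 3 by norm_num]
        norm_num [h.1, h.2.1, h.2.2]
  | succ n ih =>
    have h := (fwd_s6 C hrec n (by positivity) ih.1 ih.2.1 ih.2.2).2.2.2
    have e : (4*(((n:ℕ)+1:ℕ):ℤ)+3) = 4*(n:ℤ)+7 := by push_cast; ring
    refine ⟨?_, ?_, ?_⟩ <;> rw [e]
    · rw [h.1]; push_cast; ring
    · rw [h.2.1]; push_cast; ring
    · rw [h.2.2]; push_cast; ring

end

/-- For `r ≥ 1`, the row of `C⁽ʳ⁾` indexed by `-1` satisfies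
`C⁽ʳ⁾₍₋₁,₂₎ = (-1)^(r+1)·⌊r/4⌋` and `C⁽ʳ⁾₍₋₁,₃₎ = (-1)^r·(⌈r/2⌉ - 1)`. -/
theorem C_row_neg1_formula (C : ℤ → Matrix (Fin 3) (Fin 3) ℤ) (h0 : C 0 = C0)
    (hrec : ∀ r : ℤ, C (r + 1) = if Even r then stepEven (C r) else stepOdd (C r)) :
    ∀ r : ℕ, 1 ≤ r →
      C (r : ℤ) 0 1 = (-1 : ℤ) ^ (r + 1) * ((r / 4 : ℕ) : ℤ) ∧
      C (r : ℤ) 0 2 = (-1 : ℤ) ^ r * ((((r + 1) / 2 : ℕ) : ℤ) - 1) := by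
  intro r hr
  have hb := base123 C hrec h0
  rcases eq_or_ne r 1 with rfl | h1
  · constructor
    · rw [show ((1:ℕ):ℤ) = 1 by norm_num, hb.1.1]; norm_num
    · rw [show ((1:ℕ):ℤ) = 1 by norm_num, hb.1.2]; norm_num
  rcases eq_or_ne r 2 with rfl | h2
  · constructor
    · rw [show ((2:ℕ):ℤ) = 2 by norm_num, hb.2.1.1]; norm_num
    · rw [show ((2:ℕ):ℤ) = 2 by norm_num, hb.2.1.2]; norm_num
  obtain ⟨k, hk⟩ : ∃ k : ℕ, r = 4*k+3 ∨ r = 4*k+4 ∨ r = 4*k+5 ∨ r = 4*k+6 :=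
    ⟨(r-3)/4, by omega⟩
  have hkey := key_s6 C hrec h0 k
  have hfwd := fwd_s6 C hrec k (by positivity) hkey.1 hkey.2.1 hkey.2.2
  have hek : Even (4*k+4) := ⟨2*k+2, by ring⟩
  have hok : Odd (4*k+3) := ⟨2*k+1, by ring⟩
  have hek2 : Even (4*k+6) := ⟨2*k+3, by ring⟩
  have hok2 : Odd (4*k+5) := ⟨2*k+2, by ring⟩
  have hok3 : Odd (4*k+7) := ⟨2*k+3, by ring⟩
  rcases hk with rfl | rfl | rfl | rfl
  · have ec : ((4*k+3:ℕ):ℤ) = 4*(k:ℤ)+3 := by push_cast; ring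
    constructor
    · rw [ec, hkey.2.1, Even.neg_one_pow (⟨2*k+2, by ring⟩ : Even (4*k+3+1)),
        show (4*k+3)/4 = k by omega]; ring
    · rw [ec, hkey.2.2, Odd.neg_one_pow hok, show (4*k+3+1)/2 = 2*k+2 by omega]
      push_cast; ring
  · have ec : ((4*k+4:ℕ):ℤ) = 4*(k:ℤ)+4 := by push_cast; ring
    constructor
    · rw [ec, hfwd.1.2.1, Odd.neg_one_pow (⟨2*k+2, by ring⟩ : Odd (4*k+4+1)),
        show (4*k+4)/4 = k+1 by omega]
      push_cast; ring
    · rw [ec, hfwd.1.2.2, Even.neg_one_pow hek, show (4*k+4+1)/2 = 2*k+2 by omega]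
      push_cast; ring
  · have ec : ((4*k+5:ℕ):ℤ) = 4*(k:ℤ)+5 := by push_cast; ring
    constructor
    · rw [ec, hfwd.2.1.2.1, Even.neg_one_pow (⟨2*k+3, by ring⟩ : Even (4*k+5+1)),
        show (4*k+5)/4 = k+1 by omega]
      push_cast; ring
    · rw [ec, hfwd.2.1.2.2, Odd.neg_one_pow hok2, show (4*k+5+1)/2 = 2*k+3 by omega]
      push_cast; ring
  · have ec : ((4*k+6:ℕ):ℤ) = 4*(k:ℤ)+6 := by push_cast; ring
    constructor
    · rw [ec, hfwd.2.2.1.2.1, Odd.neg_one_pow (⟨2*k+3, by ring⟩ : Odd (4*k+6+1)),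
        show (4*k+6)/4 = k+1 by omega]
      push_cast; ring
    · rw [ec, hfwd.2.2.1.2.2, Even.neg_one_pow hek2, show (4*k+6+1)/2 = 2*k+3 by omega]
      push_cast; ring
end

section
/- With C^{(r)} as in the bipartite-belt recurrence with initial value C^{(0)} = [[1,0,0],[-1,-1,1],[0,-1,1]] (extended to all integers r), the rows indexed by -1 and -3 satisfy C^{(r)}_{-3} = C^{(r+4)}_{-1} for all r ∈ Z. -/
lemma stepEven_apply (C : Matrix (Fin 3) (Fin 3) ℤ) (i : Fin 3) :
    stepEven C i 0 = -C i 0 ∧ stepEven C i 1 = -C i 1 ∧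
    stepEven C i 2 = C i 2 - nPart (C i 0) - ![3, 1, 3] i * nPart (C i 1) := by
  refine ⟨?_, ?_, ?_⟩ <;> simp [stepEven]

lemma stepOdd_apply (C : Matrix (Fin 3) (Fin 3) ℤ) (i : Fin 3) :
    stepOdd C i 0 = C i 0 - nPart (C i 2) ∧
    stepOdd C i 1 = C i 1 - ![1, 3, 1] i * nPart (C i 2) ∧
    stepOdd C i 2 = -C i 2 := by
  refine ⟨?_, ?_, ?_⟩ <;> simp [stepOdd]

/-- Rows 0 and 2 transform identically, forward. -/
lemma rows_fwd (A B : Matrix (Fin 3) (Fin 3) ℤ)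
    (h : ∀ j, A 2 j = B 0 j) :
    (∀ j, stepEven A 2 j = stepEven B 0 j) ∧ (∀ j, stepOdd A 2 j = stepOdd B 0 j) := by
  obtain ⟨hA0, hA1, hA2⟩ := stepEven_apply A 2
  obtain ⟨hB0, hB1, hB2⟩ := stepEven_apply B 0
  obtain ⟨hA0', hA1', hA2'⟩ := stepOdd_apply A 2
  obtain ⟨hB0', hB1', hB2'⟩ := stepOdd_apply B 0
  constructor <;> intro j <;> fin_cases j <;>
    simp_all [h 0, h 1, h 2]

/-- Rows 0 and 2 transform identically, backward (steps are injective rowwise). -/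
lemma rows_bwd (A B : Matrix (Fin 3) (Fin 3) ℤ) :
    ((∀ j, stepEven A 2 j = stepEven B 0 j) → ∀ j, A 2 j = B 0 j) ∧
    ((∀ j, stepOdd A 2 j = stepOdd B 0 j) → ∀ j, A 2 j = B 0 j) := by
  obtain ⟨hA0, hA1, hA2⟩ := stepEven_apply A 2
  obtain ⟨hB0, hB1, hB2⟩ := stepEven_apply B 0
  obtain ⟨hA0', hA1', hA2'⟩ := stepOdd_apply A 2
  obtain ⟨hB0', hB1', hB2'⟩ := stepOdd_apply B 0
  constructor <;> intro h j <;>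
    have h0 := h 0 <;> have h1 := h 1 <;> have h2 := h 2 <;>
    fin_cases j <;> simp_all [nPart]

/-- The rows of `C⁽ʳ⁾` indexed by `-3` and `-1` satisfy `C⁽ʳ⁾₋₃ = C⁽ʳ⁺⁴⁾₋₁`
for all `r ∈ ℤ`. -/
theorem C_row_neg3_eq_shift (C : ℤ → Matrix (Fin 3) (Fin 3) ℤ) (h0 : C 0 = C0)
    (hrec : ∀ r : ℤ, C (r + 1) = if Even r then stepEven (C r) else stepOdd (C r)) :
    ∀ r : ℤ, ∀ j : Fin 3, C r 2 j = C (r + 4) 0 j := by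
  have base : ∀ j : Fin 3, C 0 2 j = C 4 0 j := by
    have h1 : C 1 = stepEven (C 0) := by have := hrec 0; norm_num at this; exact this
    have h2 : C 2 = stepOdd (C 1) := by
      have := hrec 1; norm_num [Int.even_iff] at this; exact this
    have h3 : C 3 = stepEven (C 2) := by
      have := hrec 2; norm_num [Int.even_iff] at this; exact this
    have h4 : C 4 = stepOdd (C 3) := by
      have := hrec 3; norm_num [Int.even_iff] at this; exact this
    rw [h4, h3, h2, h1, h0]
    decide
  -- propagation
  have fwd : ∀ r : ℤ, (∀ j, C r 2 j = C (r + 4) 0 j) → ∀ j, C (r + 1) 2 j = C (r + 1 + 4) 0 j := by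
    intro r h j
    have e1 := hrec r
    have e2 := hrec (r + 4)
    have hpar : Even (r + 4) ↔ Even r := by simp [Int.even_add, (by decide : Even (4:ℤ))]
    have h5 : r + 1 + 4 = r + 4 + 1 := by ring
    rw [h5, e1, e2]
    by_cases he : Even r
    · simp only [if_pos he, if_pos (hpar.mpr he)]
      exact (rows_fwd (C r) (C (r + 4)) h).1 j
    · simp only [if_neg he, if_neg (fun hh => he (hpar.mp hh))]
      exact (rows_fwd (C r) (C (r + 4)) h).2 j
  have bwd : ∀ r : ℤ, (∀ j, C (r + 1) 2 j = C (r + 1 + 4) 0 j) → ∀ j, C r 2 j = C (r + 4) 0 j := by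
    intro r h
    have e1 := hrec r
    have e2 := hrec (r + 4)
    have hpar : Even (r + 4) ↔ Even r := by simp [Int.even_add, (by decide : Even (4:ℤ))]
    have h5 : r + 1 + 4 = r + 4 + 1 := by ring
    rw [h5, e1, e2] at h
    by_cases he : Even r
    · simp only [if_pos he, if_pos (hpar.mpr he)] at h
      exact (rows_bwd (C r) (C (r + 4))).1 h
    · simp only [if_neg he, if_neg (fun hh => he (hpar.mp hh))] at h
      exact (rows_bwd (C r) (C (r + 4))).2 h
  intro r
  induction r using Int.induction_on with
  | zero => exact base
  | succ n ih => exact fwd n ih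
  | pred n ih => exact bwd (-n - 1) (by simpa using ih)
end

section
/- With C^{(r)} as in the bipartite-belt recurrence with initial value C^{(0)} = [[1,0,0],[-1,-1,1],[0,-1,1]], the row indexed -1 satisfies the antisymmetry C^{(r)}_{-1} = -C^{(-r+1)}_{-1} for all r ∈ Z. -/
/- Auxiliary: the recurrence restricted to row `-1`. -/
def rowE (v : Fin 3 → ℤ) : Fin 3 → ℤ := ![-v 0, -v 1, v 2 - nPart (v 0) - 3 * nPart (v 1)]
def rowO (v : Fin 3 → ℤ) : Fin 3 → ℤ := ![v 0 - nPart (v 2), v 1 - nPart (v 2), -v 2]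
def invE (v : Fin 3 → ℤ) : Fin 3 → ℤ := ![-v 0, -v 1, v 2 + nPart (-v 0) + 3 * nPart (-v 1)]
def invO (v : Fin 3 → ℤ) : Fin 3 → ℤ := ![v 0 + nPart (-v 2), v 1 + nPart (-v 2), -v 2]

lemma stepEven_row0 (M : Matrix (Fin 3) (Fin 3) ℤ) : stepEven M 0 = rowE (M 0) := by
  funext j; fin_cases j <;> simp [stepEven, rowE]

lemma stepOdd_row0 (M : Matrix (Fin 3) (Fin 3) ℤ) : stepOdd M 0 = rowO (M 0) := by
  funext j; fin_cases j <;> simp [stepOdd, rowO]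

lemma invE_rowE (v : Fin 3 → ℤ) : invE (rowE v) = v := by
  funext j; fin_cases j <;> simp [invE, rowE] <;> ring

lemma invO_rowO (v : Fin 3 → ℤ) : invO (rowO v) = v := by
  funext j; fin_cases j <;> simp [invO, rowO] <;> ring

lemma keyE (v : Fin 3 → ℤ) : rowE (-(rowE (-v))) = v := by
  funext j; fin_cases j <;> simp [rowE] <;> ring

lemma keyO (v : Fin 3 → ℤ) : rowO (-(rowO (-v))) = v := by
  funext j; fin_cases j <;> simp [rowO] <;> ring

/-- The row of `C⁽ʳ⁾` indexed by `-1` satisfies the antisymmetry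
`C⁽ʳ⁾₋₁ = -C⁽⁻ʳ⁺¹⁾₋₁` for all `r ∈ ℤ`. -/
theorem C_row_neg1_antisymmetry (C : ℤ → Matrix (Fin 3) (Fin 3) ℤ) (h0 : C 0 = C0)
    (hrec : ∀ r : ℤ, C (r + 1) = if Even r then stepEven (C r) else stepOdd (C r)) :
    ∀ r : ℤ, ∀ j : Fin 3, C r 0 j = -C (-r + 1) 0 j := by
  set D : ℤ → (Fin 3 → ℤ) := fun r => -(C (-r + 1) 0) with hDdef
  have hrow : ∀ r : ℤ, C (r + 1) 0 = if Even r then rowE (C r 0) else rowO (C r 0) := by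
    intro r
    by_cases h : Even r
    · rw [hrec r, if_pos h, if_pos h]; exact stepEven_row0 _
    · rw [hrec r, if_neg h, if_neg h]; exact stepOdd_row0 _
  have hD : ∀ r : ℤ, D (r + 1) = if Even r then rowE (D r) else rowO (D r) := by
    intro r
    have h1 : C (-r + 1) 0 = if Even (-r) then rowE (C (-r) 0) else rowO (C (-r) 0) := hrow (-r)
    have hpar : Even (-r) ↔ Even r := even_neg
    have hDr1 : D (r + 1) = -(C (-r) 0) := by
      simp only [hDdef]
      norm_num
    have hDr : D r = -(C (-r) 0 |> (if Even r then rowE else rowO)) := by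
      by_cases h : Even r
      · simp only [hDdef, h, if_true]
        rw [h1]; simp [hpar.mpr h]
      · simp only [hDdef, h, if_false]
        rw [h1]; simp [h, hpar]
    have hC : C (-r) 0 = -(D (r + 1)) := by rw [hDr1]; simp
    by_cases h : Even r
    · simp only [h, if_true] at hDr ⊢
      rw [hDr, hC, keyE]
    · simp only [h, if_false] at hDr ⊢
      rw [hDr, hC, keyO]
  have base : C 0 0 = D 0 := by
    have h1 : C (0 + 1) 0 = rowE (C 0 0) := by
      have := hrow 0; simpa using this
    simp only [hDdef]
    have : C (-0 + 1) = C (0 + 1) := by norm_num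
    rw [this, h1, h0]
    funext j; fin_cases j <;> simp [rowE, C0, nPart]
  have main : ∀ r : ℤ, C r 0 = D r := by
    intro r
    induction r using Int.induction_on with
    | zero => exact base
    | succ n ih =>
        rw [hrow n, hD n, ih]
    | pred n ih =>
        have e : (-(n:ℤ) - 1) + 1 = -n := by ring
        have hC' : C (-n) 0 = if Even (-(n:ℤ) - 1) then rowE (C (-n - 1) 0)
            else rowO (C (-n - 1) 0) := by
          have := hrow (-(n:ℤ) - 1); rwa [e] at this
        have hD' : D (-n) = if Even (-(n:ℤ) - 1) then rowE (D (-n - 1))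
            else rowO (D (-n - 1)) := by
          have := hD (-(n:ℤ) - 1); rwa [e] at this
        by_cases h : Even (-(n:ℤ) - 1)
        · simp only [h, if_true] at hC' hD'
          have : invE (rowE (C (-(n:ℤ) - 1) 0)) = invE (rowE (D (-n - 1))) := by
            rw [← hC', ← hD', ih]
          rwa [invE_rowE, invE_rowE] at this
        · simp only [h, if_false] at hC' hD'
          have : invO (rowO (C (-(n:ℤ) - 1) 0)) = invO (rowO (D (-n - 1))) := by
            rw [← hC', ← hD', ih]
          rwa [invO_rowO, invO_rowO] at this
  intro r j
  have := congrFun (main r) j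
  simpa [hDdef] using this
end
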